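/- In the setting of the Schwarzschild–de Sitter Hamiltonian p(r,ξ) = Δ_r ξ² - (r⁴/Δ_r) z² + m on (r_-, r_+) × ℝ with z² = 1 and m ≥ 0: the Hamilton vector field components (H_p r, H_p ξ) = (∂_ξ p, -∂_r p) both vanish at (r,ξ) if and only if r = r_p and ξ = 0, where r_p = ((n-1)M)^{1/(n-3)}. -/

import Mathlib

/-- The rescaled Schwarzschild–de Sitter metric coefficient
`μ̃(r) = r^{-2} - 2 M r^{1-n} - λ`. -/
noncomputable def mutilde (n : ℕ) (M lam : ℝ) (r : ℝ) : ℝ :=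
  r ^ (-2 : ℝ) - 2 * M * r ^ ((1 : ℝ) - (n : ℝ)) - lam

/-- `Δ_r = r² (1 - λ r²) - 2 M r^{5-n}`. -/
noncomputable def DeltaR (n : ℕ) (M lam : ℝ) (r : ℝ) : ℝ :=
  r ^ 2 * (1 - lam * r ^ 2) - 2 * M * r ^ ((5 : ℝ) - (n : ℝ))

/-- The radius `r_p = ((n-1) M)^{1/(n-3)}` of the photon sphere. -/
noncomputable def rpCrit (n : ℕ) (M : ℝ) : ℝ :=
  (((n : ℝ) - 1) * M) ^ ((1 : ℝ) / ((n : ℝ) - 3))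

theorem stmt8 (n : ℕ) (hn : 4 ≤ n) (M lam : ℝ) (hM : 0 < M) (hlam : 0 < lam)
    (hnd : M ^ 2 * lam ^ ((n : ℝ) - 3)
      < ((n : ℝ) - 3) ^ ((n : ℝ) - 3) / ((n : ℝ) - 1) ^ ((n : ℝ) - 1))
    (rm rp : ℝ) (hrm : 0 < rm) (hlt : rm < rp)
    (hrootm : mutilde n M lam rm = 0) (hrootp : mutilde n M lam rp = 0)
    (hpos : ∀ r : ℝ, rm < r → r < rp → 0 < mutilde n M lam r)
    (hrpm : rm < rpCrit n M) (hrpp : rpCrit n M < rp)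
    (z m : ℝ) (hz : z ^ 2 = 1) (hm : 0 ≤ m) :
    ∀ p : ℝ → ℝ → ℝ,
      (p = fun r ξ => DeltaR n M lam r * ξ ^ 2
          - (r ^ 4 / DeltaR n M lam r) * z ^ 2 + m) →
    ∀ r ξ : ℝ, rm < r → r < rp →
      ((deriv (p r) ξ = 0 ∧ deriv (fun r' => p r' ξ) r = 0) ↔
        (r = rpCrit n M ∧ ξ = 0)) := by
  intro p hp r ξ h1 h2
  subst hp
  have hr0 : (0:ℝ) < r := hrm.trans h1
  have hrne : r ≠ 0 := ne_of_gt hr0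
  have hn4 : (4:ℝ) ≤ (n:ℝ) := by exact_mod_cast hn
  have ha : (0:ℝ) < (n:ℝ) - 3 := by linarith
  have hane : ((n:ℝ) - 3) ≠ 0 := ne_of_gt ha
  have hc : (0:ℝ) < ((n:ℝ) - 1) * M := by nlinarith
  -- basic rpow identities at r
  have hw : r ^ ((5:ℝ) - (n:ℝ)) = r * r ^ ((4:ℝ) - (n:ℝ)) := by
    nth_rewrite 2 [← Real.rpow_one r]
    rw [← Real.rpow_add hr0]; ring_nf
  have hvpos : 0 < r ^ ((n:ℝ) - 3) := Real.rpow_pos_of_pos hr0 _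
  have hu : r ^ ((5:ℝ) - (n:ℝ)) = r ^ 2 / r ^ ((n:ℝ) - 3) := by
    rw [eq_div_iff (ne_of_gt hvpos), ← Real.rpow_add hr0,
      show (5:ℝ) - (n:ℝ) + ((n:ℝ) - 3) = ((2:ℕ):ℝ) by push_cast; ring,
      Real.rpow_natCast]
  -- r = rpCrit ↔ r^(n-3) = (n-1)M
  have key : r = rpCrit n M ↔ r ^ ((n:ℝ) - 3) = ((n:ℝ) - 1) * M := by
    constructor
    · rintro rfl
      unfold rpCrit
      rw [← Real.rpow_mul hc.le, one_div, inv_mul_cancel₀ hane, Real.rpow_one]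
    · intro h
      have h2 : (r ^ ((n:ℝ) - 3)) ^ (((n:ℝ) - 3))⁻¹ = r := by
        rw [← Real.rpow_mul hr0.le, mul_inv_cancel₀ hane, Real.rpow_one]
      rw [h] at h2
      unfold rpCrit
      rw [one_div, ← h2]
  -- positivity of Delta
  have hDeq : DeltaR n M lam r = r ^ 4 * mutilde n M lam r := by
    unfold DeltaR mutilde
    have hu1 : r ^ ((1:ℝ) - (n:ℝ)) = r ^ ((5:ℝ) - (n:ℝ)) / r ^ 4 := by
      rw [eq_div_iff (pow_ne_zero 4 hrne), ← Real.rpow_natCast r 4,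
        ← Real.rpow_add hr0]
      ring_nf
    have hu2 : r ^ (-2:ℝ) = 1 / r ^ 2 := by
      rw [show (-2:ℝ) = -((2:ℕ):ℝ) by norm_num, Real.rpow_neg hr0.le,
        Real.rpow_natCast, one_div]
    rw [hu1, hu2]
    field_simp
    ring
  have hDpos : 0 < DeltaR n M lam r := by
    rw [hDeq]
    exact mul_pos (pow_pos hr0 4) (hpos r h1 h2)
  have hDne : DeltaR n M lam r ≠ 0 := ne_of_gt hDpos
  -- derivative of Delta
  set D' : ℝ := 2*r - 4*lam*r^3 - 2*M*(((5:ℝ) - (n:ℝ)) * r ^ ((4:ℝ) - (n:ℝ))) with hD'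
  have hDel : HasDerivAt (DeltaR n M lam) D' r := by
    have hp1 : HasDerivAt (fun s:ℝ => s^2*(1-lam*s^2)) (2*r - 4*lam*r^3) r := by
      have := (hasDerivAt_pow 2 r).mul (((hasDerivAt_pow 2 r).const_mul lam).const_sub 1)
      exact this.congr_deriv (by norm_num; ring)
    have hp2 : HasDerivAt (fun s:ℝ => 2*M*s^((5:ℝ) - (n:ℝ)))
        (2*M*(((5:ℝ) - (n:ℝ)) * r ^ ((5:ℝ) - (n:ℝ) - 1))) r :=
      (Real.hasDerivAt_rpow_const (Or.inl hrne)).const_mul (2*M)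
    have := hp1.sub hp2
    rw [show (5:ℝ) - (n:ℝ) - 1 = (4:ℝ) - (n:ℝ) by ring] at this
    exact this
  -- derivative of the quotient
  have h4 : HasDerivAt (fun s:ℝ => s^4) (4*r^3) r := by
    have := hasDerivAt_pow 4 r
    norm_num at this
    exact this
  have hQ : HasDerivAt (fun s:ℝ => s^4 / DeltaR n M lam s)
      ((4*r^3 * DeltaR n M lam r - r^4 * D') / (DeltaR n M lam r)^2) r :=
    h4.div hDel hDne
  -- derivative in r of p
  have hPr : HasDerivAt (fun r' => DeltaR n M lam r' * ξ^2 - (r'^4 / DeltaR n M lam r') * z^2 + m)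
      (D' * ξ^2 - ((4*r^3 * DeltaR n M lam r - r^4 * D') / (DeltaR n M lam r)^2) * z^2) r :=
    ((hDel.mul_const _).sub (hQ.mul_const _)).add_const m
  -- derivative in ξ
  have hPxi : HasDerivAt (fun x : ℝ => DeltaR n M lam r * x^2 - (r^4 / DeltaR n M lam r) * z^2 + m)
      (DeltaR n M lam r * (2*ξ)) ξ := by
    have := (((hasDerivAt_pow 2 ξ).const_mul (DeltaR n M lam r)).sub_const
      ((r^4 / DeltaR n M lam r) * z^2)).add_const m
    exact this.congr_deriv (by norm_num)
  rw [hPxi.deriv, hPr.deriv, hz]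
  -- numerator identity
  have hnum : 4*r^3 * DeltaR n M lam r - r^4 * D' =
      2*r^3*(r^2 - ((n:ℝ) - 1)*M * r ^ ((5:ℝ) - (n:ℝ))) := by
    unfold DeltaR
    rw [hD', hw]
    ring
  constructor
  · rintro ⟨e1, e2⟩
    have hxi : ξ = 0 := by
      rcases mul_eq_zero.mp e1 with h | h
      · exact absurd h hDne
      · linarith
    subst hxi
    have e2 : (4*r^3 * DeltaR n M lam r - r^4 * D') / (DeltaR n M lam r)^2 = 0 := by
      nlinarith [e2]
    have hnum0 : 4*r^3 * DeltaR n M lam r - r^4 * D' = 0 := by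
      have := div_eq_zero_iff.mp e2
      rcases this with h | h
      · exact h
      · exact absurd h (pow_ne_zero 2 hDne)
    rw [hnum, hu] at hnum0
    refine ⟨key.mpr ?_, rfl⟩
    have hr3 : (2:ℝ)*r^3 ≠ 0 := by positivity
    have h5 : r^2 - ((n:ℝ) - 1)*M * (r^2 / r ^ ((n:ℝ) - 3)) = 0 := by
      rcases mul_eq_zero.mp hnum0 with h | h
      · exact absurd h hr3
      · exact h
    have hr2 : (r:ℝ)^2 ≠ 0 := pow_ne_zero 2 hrne
    field_simp at h5
    have h6 : r ^ ((n:ℝ) - 3) * r ^ 2 = (((n:ℝ) - 1) * M) * r ^ 2 := by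
      linear_combination h5
    exact mul_right_cancel₀ (pow_ne_zero 2 hrne) h6
  · rintro ⟨hr, rfl⟩
    have hv : r ^ ((n:ℝ) - 3) = ((n:ℝ) - 1) * M := key.mp hr
    have hnum0 : 4*r^3 * DeltaR n M lam r - r^4 * D' = 0 := by
      rw [hnum, hu, hv]
      field_simp
      rw [div_self (by linarith : (n:ℝ) - 1 ≠ 0)]; ring
    constructor
    · rw [mul_zero, mul_zero]
    · rw [hnum0, zero_div, zero_mul]
      ring
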